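/- Let 𝕏 be a zero-dimensional Polish space, (C^ε_i)_{(ε,i)∈2×ω} a family of pairwise disjoint clopen subsets of 𝕏 such that 𝕏 ∖ ⋃_{ε,i} C^ε_i ≠ ∅ and no clopen set meeting 𝕏 ∖ ⋃_{ε,i} C^ε_i is (⋃_i C⁰_i × C¹_i)-discrete. Then there is no continuous countable coloring of (𝕏, ⋃_i C⁰_i × C¹_i): no continuous c: 𝕏 → ω satisfies c(x) ≠ c(y) for all (x,y) ∈ ⋃_i C⁰_i × C¹_i. -/

import Mathlib

/-- if `(C^ε_i)` is a pairwise disjoint family of clopen subsets of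
a zero-dimensional Polish space `𝕏` with nonempty "remainder"
`𝕏 ∖ ⋃ C^ε_i`, and no clopen set meeting the remainder is
`(⋃_i C⁰_i × C¹_i)`-discrete, then `(𝕏, ⋃_i C⁰_i × C¹_i)` has no continuous
countable coloring. -/
theorem stmt4 {𝕏 : Type*} [TopologicalSpace 𝕏] [PolishSpace 𝕏]
    (hbasis : TopologicalSpace.IsTopologicalBasis {s : Set 𝕏 | IsClopen s})
    (C : Bool → ℕ → Set 𝕏) (hclopen : ∀ ε i, IsClopen (C ε i))
    (hdisj : ∀ ε i ε' i', (ε, i) ≠ (ε', i') → Disjoint (C ε i) (C ε' i'))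
    (hne : (Set.univ \ ⋃ ε, ⋃ i, C ε i).Nonempty)
    (hnd : ∀ D : Set 𝕏, IsClopen D → (D ∩ (Set.univ \ ⋃ ε, ⋃ i, C ε i)).Nonempty →
      ∃ x ∈ D, ∃ y ∈ D, ∃ i, x ∈ C false i ∧ y ∈ C true i) :
    ¬ ∃ c : 𝕏 → ℕ, Continuous c ∧
      ∀ x y, (∃ i, x ∈ C false i ∧ y ∈ C true i) → c x ≠ c y := by
  rintro ⟨c, hc, hcol⟩
  set R : Set 𝕏 := Set.univ \ ⋃ ε, ⋃ i, C ε i with hR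
  have hRclosed : IsClosed R := by
    have : IsOpen (⋃ ε, ⋃ i, C ε i) :=
      isOpen_iUnion fun ε => isOpen_iUnion fun i => (hclopen ε i).isOpen
    simpa [hR, Set.diff_eq, Set.univ_inter] using this.isClosed_compl.inter isClosed_univ
  haveI : PolishSpace R := hRclosed.polishSpace
  letI := TopologicalSpace.upgradeIsCompletelyMetrizable R
  have hfib : ∀ n : ℕ, IsClopen (c ⁻¹' {n}) := fun n =>
    (isClopen_discrete ({n} : Set ℕ)).preimage hc
  obtain ⟨x0, hx0R⟩ := hne
  -- Baire category on R
  have hcover : (Set.univ : Set R) = ⋃ n : ℕ, (Subtype.val ⁻¹' (c ⁻¹' {n})) := by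
    ext x; simp
  haveI : Nonempty R := ⟨⟨x0, hx0R⟩⟩
  obtain ⟨n, xn, hxn⟩ : ∃ n : ℕ, (interior (Subtype.val ⁻¹' (c ⁻¹' {n}) : Set R)).Nonempty :=
    nonempty_interior_of_iUnion_of_closed
      (fun n => (hfib n).isClosed.preimage continuous_subtype_val)
      (by rw [← hcover])
  -- interior in R gives an open U in 𝕏
  obtain ⟨U, hUopen, hUsub⟩ : ∃ U : Set 𝕏, IsOpen U ∧ (xn : 𝕏) ∈ U ∧
      Subtype.val ⁻¹' U ⊆ (Subtype.val ⁻¹' (c ⁻¹' {n}) : Set R) := by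
    have h1 : IsOpen (interior (Subtype.val ⁻¹' (c ⁻¹' {n}) : Set R)) := isOpen_interior
    rw [isOpen_induced_iff] at h1
    obtain ⟨U, hU, hUeq⟩ := h1
    exact ⟨U, hU, by rw [← hUeq] at hxn; exact hxn, by rw [hUeq]; exact interior_subset⟩
  obtain ⟨hxnU, hUsub⟩ := hUsub
  -- shrink to a clopen basic set
  obtain ⟨D, hDclopen, hxnD, hDU⟩ :=
    hbasis.exists_subset_of_mem_open hxnU hUopen
  have hxnfib : c (xn : 𝕏) = n := by
    have : (xn : R) ∈ Subtype.val ⁻¹' U := hxnU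
    exact hUsub this
  set D' : Set 𝕏 := D ∩ c ⁻¹' {n} with hD'
  have hD'clopen : IsClopen D' := hDclopen.inter (hfib n)
  have hmeet : (D' ∩ R).Nonempty := ⟨xn, ⟨hxnD, hxnfib⟩, xn.2⟩
  obtain ⟨x, hxD, y, hyD, i, hxC, hyC⟩ := hnd D' hD'clopen hmeet
  exact hcol x y ⟨i, hxC, hyC⟩ (by rw [hxD.2, hyD.2])
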